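/- For fixed odd prime power q, the limit as n → ∞ of i_Sp(2n,q)/q^{n^2} over even n equals (1/2)[∏_{i≥1}(1 + q^{1-2i})^2 + ∏_{i≥1}(1 − q^{1-2i})^2] = ∏_{i≥1}(1 + q^{4-8i})^2 (1 - q^{-8i})/(1 - q^{-2i}), where i_Sp(2n,q) = ∑_{r=0}^{n} |Sp(2n,q)|/(|Sp(2r,q)| |Sp(2n-2r,q)|). -/

import Mathlib

/-- `|Sp(2m,q)| = q^{m²} ∏_{i=1}^m (q^{2i} - 1)` as a real number. -/
noncomputable def spOrder (q : ℝ) (m : ℕ) : ℝ :=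
  q ^ (m ^ 2) * ∏ i ∈ Finset.range m, (q ^ (2 * (i + 1)) - 1)

open Filter Finset Topology

namespace SpAux


/-- Weierstrass-type bound: `1 - ∑ x ≤ ∏ (1 - x)` over any finset. -/
lemma one_sub_sum_le_prod (x : ℕ → ℝ) (h0 : ∀ i, 0 ≤ x i) (h1 : ∀ i, x i ≤ 1)
    (s : Finset ℕ) : 1 - ∑ i ∈ s, x i ≤ ∏ i ∈ s, (1 - x i) := by
  classical
  induction s using Finset.induction with
  | empty => simp
  | insert _ _ hns ih =>
    rename_i a s'
    rw [Finset.prod_insert hns, Finset.sum_insert hns]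
    have hP0 : (0:ℝ) ≤ ∏ i ∈ s', (1 - x i) :=
      Finset.prod_nonneg fun i _ => by linarith [h1 i]
    have hP1 : ∏ i ∈ s', (1 - x i) ≤ 1 :=
      Finset.prod_le_one (fun i _ => by linarith [h1 i]) (fun i _ => by linarith [h0 i])
    nlinarith [h0 a, h1 a, ih]

lemma one_le_prod_real {f : ℕ → ℝ} (h : ∀ i, 1 ≤ f i) (s : Finset ℕ) :
    1 ≤ ∏ i ∈ s, f i := by
  classical
  induction s using Finset.induction with
  | empty => simp
  | insert _ _ hns ih => rename_i a s'; rw [Finset.prod_insert hns]; nlinarith [h a]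

/-- Monotone-net criterion for multipliability of factors `≥ 1`. -/
lemma multipliable_of_one_le {f : ℕ → ℝ} (h1 : ∀ i, 1 ≤ f i) (C : ℝ)
    (hC : ∀ s : Finset ℕ, ∏ i ∈ s, f i ≤ C) : Multipliable f := by
  have hmono : Monotone fun s : Finset ℕ => ∏ i ∈ s, f i := by
    intro s t hst
    have := Finset.prod_sdiff hst (f := f)
    have h1' : 1 ≤ ∏ i ∈ t \ s, f i := one_le_prod_real h1 _
    have h2' : 1 ≤ ∏ i ∈ s, f i := one_le_prod_real h1 _
    nlinarith
  exact ⟨_, tendsto_atTop_ciSup hmono ⟨C, by rintro y ⟨s, rfl⟩; exact hC s⟩⟩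

/-- Antitone-net criterion for multipliability of factors in `[0,1]`. -/
lemma multipliable_of_le_one {f : ℕ → ℝ} (h0 : ∀ i, 0 ≤ f i) (h1 : ∀ i, f i ≤ 1) :
    Multipliable f := by
  have hanti : Antitone fun s : Finset ℕ => ∏ i ∈ s, f i := by
    intro s t hst
    have := Finset.prod_sdiff hst (f := f)
    have h1' : ∏ i ∈ t \ s, f i ≤ 1 :=
      Finset.prod_le_one (fun i _ => h0 i) (fun i _ => h1 i)
    have h0' : (0:ℝ) ≤ ∏ i ∈ t \ s, f i := Finset.prod_nonneg fun i _ => h0 i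
    have h0'' : (0:ℝ) ≤ ∏ i ∈ s, f i := Finset.prod_nonneg fun i _ => h0 i
    nlinarith
  exact ⟨_, tendsto_atTop_ciInf hanti ⟨0, by
    rintro y ⟨s, rfl⟩; exact Finset.prod_nonneg fun i _ => h0 i⟩⟩


noncomputable def gp (c : ℝ) (n : ℕ) : ℝ := ∏ i ∈ Finset.range n, (1 - c ^ (2 * (i + 1)))

noncomputable def GG (c : ℝ) : ℝ := ⨅ n, gp c n

noncomputable def gb (c : ℝ) (m r : ℕ) : ℝ :=
  if r ≤ m then gp c m / (gp c r * gp c (m - r)) else 0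

section c
variable {c : ℝ} (hc0 : 0 < c) (hc3 : c ≤ 1/3)

include hc0 hc3 in
lemma pow_term_le (i : ℕ) : c ^ (2 * (i + 1)) ≤ (1/9 : ℝ) ^ (i + 1) := by
  have : c ^ (2 * (i+1)) = (c^2) ^ (i+1) := by rw [pow_mul]
  rw [this]
  have h2 : c^2 ≤ 1/9 := by nlinarith
  exact pow_le_pow_left₀ (by positivity) h2 _

include hc0 hc3 in
lemma sum_pow_le (s : Finset ℕ) : ∑ i ∈ s, c ^ (2 * (i + 1)) ≤ 1/8 := by
  have hs : Summable fun i : ℕ => (1/9 : ℝ) ^ (i + 1) := by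
    apply Summable.comp_injective (summable_geometric_of_lt_one (by norm_num) (by norm_num))
    exact fun a b => by omega
  calc ∑ i ∈ s, c ^ (2 * (i + 1)) ≤ ∑ i ∈ s, (1/9:ℝ) ^ (i+1) :=
        Finset.sum_le_sum fun i _ => pow_term_le hc0 hc3 i
    _ ≤ ∑' i : ℕ, (1/9:ℝ)^(i+1) := Summable.sum_le_tsum s (fun i _ => by positivity) hs
    _ ≤ 1/8 := by
        have : ∑' i : ℕ, (1/9:ℝ)^(i+1) = (1/9) * (1 - 1/9)⁻¹ := by
          simp_rw [pow_succ, mul_comm ((1/9:ℝ)^ _) (1/9:ℝ)]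
          rw [tsum_mul_left, tsum_geometric_of_lt_one (by norm_num) (by norm_num)]
        rw [this]; norm_num


include hc0 hc3 in
lemma pow_le_ninth (i : ℕ) : c ^ (2 * (i + 1)) ≤ 1/9 := by
  have h : ((1:ℝ)/9) ^ (i + 1) ≤ ((1:ℝ)/9) ^ 1 :=
    pow_le_pow_of_le_one (by norm_num) (by norm_num) (by omega)
  have := pow_term_le hc0 hc3 (c := c) i
  simpa using le_trans this h

include hc0 hc3 in
lemma pow_le_one' (i : ℕ) : c ^ (2 * (i + 1)) ≤ 1 :=
  le_trans (pow_term_le hc0 hc3 i) (by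
    calc ((1:ℝ)/9) ^ (i+1) ≤ 1^(i+1) := pow_le_pow_left₀ (by norm_num) (by norm_num) _
      _ = 1 := one_pow _)

include hc0 hc3 in
lemma gp_ge (n : ℕ) : (7/8 : ℝ) ≤ gp c n := by
  have h := one_sub_sum_le_prod (fun i => c ^ (2 * (i + 1)))
    (fun i => by positivity) (fun i => pow_le_one' hc0 hc3 i) (Finset.range n)
  have h2 := sum_pow_le hc0 hc3 (c := c) (Finset.range n)
  unfold gp
  linarith

include hc0 hc3 in
lemma gp_pos (n : ℕ) : (0:ℝ) < gp c n := lt_of_lt_of_le (by norm_num) (gp_ge hc0 hc3 n)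

include hc0 hc3 in
lemma gp_le_one (n : ℕ) : gp c n ≤ 1 :=
  Finset.prod_le_one (fun i _ => by nlinarith [pow_le_one' hc0 hc3 i, pow_term_le hc0 hc3 i])
    (fun i _ => by nlinarith [pow_pos hc0 (2*(i+1))])

lemma gp_succ (n : ℕ) : gp c (n + 1) = gp c n * (1 - c ^ (2 * (n + 1))) :=
  Finset.prod_range_succ _ _

include hc0 hc3 in
lemma gp_anti : Antitone (gp c) := by
  apply antitone_nat_of_succ_le
  intro n
  rw [gp_succ]
  nlinarith [gp_pos hc0 hc3 (n := n), pow_pos hc0 (2*(n+1)), pow_le_one' hc0 hc3 n]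

include hc0 hc3 in
lemma tendsto_gp : Tendsto (gp c) atTop (𝓝 (GG c)) :=
  tendsto_atTop_ciInf (gp_anti hc0 hc3) ⟨7/8, by rintro y ⟨n, rfl⟩; exact gp_ge hc0 hc3 n⟩

include hc0 hc3 in
lemma GG_ge : (7/8 : ℝ) ≤ GG c := le_ciInf fun n => gp_ge hc0 hc3 n

include hc0 hc3 in
lemma GG_pos : (0:ℝ) < GG c := lt_of_lt_of_le (by norm_num) (GG_ge hc0 hc3)

include hc0 hc3 in
lemma GG_le_gp (n : ℕ) : GG c ≤ gp c n :=
  ciInf_le ⟨7/8, by rintro y ⟨m, rfl⟩; exact gp_ge hc0 hc3 m⟩ n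

-- gb facts
include hc0 hc3 in
lemma gb_nonneg (m r : ℕ) : 0 ≤ gb c m r := by
  unfold gb; split
  · exact le_of_lt (div_pos (gp_pos hc0 hc3 _) (mul_pos (gp_pos hc0 hc3 _) (gp_pos hc0 hc3 _)))
  · exact le_refl 0


include hc0 hc3 in
lemma gb_le_two (m r : ℕ) : gb c m r ≤ 2 := by
  unfold gb; split
  · rw [div_le_iff₀ (mul_pos (gp_pos hc0 hc3 _) (gp_pos hc0 hc3 _))]
    nlinarith [gp_ge hc0 hc3 (c := c) r, gp_ge hc0 hc3 (c := c) (m - r),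
      gp_le_one hc0 hc3 (c := c) m, gp_pos hc0 hc3 (c := c) r, gp_pos hc0 hc3 (c := c) (m - r)]
  · norm_num

include hc0 hc3 in
lemma gb_zero (m : ℕ) : gb c m 0 = 1 := by
  unfold gb
  rw [if_pos (Nat.zero_le m)]
  simp only [gp, Finset.range_zero, Finset.prod_empty, Nat.sub_zero, one_mul]
  exact div_self (ne_of_gt (gp_pos hc0 hc3 m))

lemma gb_of_gt {m r : ℕ} (h : m < r) : gb c m r = 0 := by
  unfold gb; rw [if_neg (by omega)]

include hc0 hc3 in
lemma gb_pascal (N r : ℕ) (hr : r ≤ N) :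
    gb c (N + 1) (r + 1) = gb c N (r + 1) + c ^ (2 * (N - r)) * gb c N r := by
  rcases eq_or_lt_of_le hr with rfl | hlt
  · unfold gb
    split_ifs with h1 h2 h3
    · omega
    · simp only [Nat.add_sub_cancel, Nat.sub_self]
      have h0 : gp c 0 = 1 := by simp [gp]
      rw [h0, mul_one, mul_one, div_self (ne_of_gt (gp_pos hc0 hc3 _)),
        div_self (ne_of_gt (gp_pos hc0 hc3 _))]
      simp
    · omega
    · omega
  · obtain ⟨t, rfl⟩ : ∃ t, N = r + 1 + t := ⟨N - r - 1, by omega⟩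
    unfold gb
    rw [if_pos (by omega), if_pos (by omega), if_pos (by omega)]
    have e1 : r + 1 + t + 1 - (r + 1) = t + 1 := by omega
    have e2 : r + 1 + t - (r + 1) = t := by omega
    have e3 : r + 1 + t - r = t + 1 := by omega
    rw [e1, e2, e3]
    have hgN : gp c (r + 1 + t + 1) = gp c (r + 1 + t) * (1 - c ^ (2 * (r + 1 + t + 1))) :=
      gp_succ _
    have hgr : gp c (r + 1) = gp c r * (1 - c ^ (2 * (r + 1))) := gp_succ _
    have hgt : gp c (t + 1) = gp c t * (1 - c ^ (2 * (t + 1))) := gp_succ _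
    have p1 : gp c (r + 1 + t) ≠ 0 := ne_of_gt (gp_pos hc0 hc3 _)
    have p2 : gp c r ≠ 0 := ne_of_gt (gp_pos hc0 hc3 _)
    have p3 : gp c t ≠ 0 := ne_of_gt (gp_pos hc0 hc3 _)
    have p4 : (1 - c ^ (2 * (r + 1))) ≠ 0 := by
      have := pow_le_ninth hc0 hc3 (c := c) r; intro h; nlinarith
    have p5 : (1 - c ^ (2 * (t + 1))) ≠ 0 := by
      have := pow_le_ninth hc0 hc3 (c := c) t; intro h; nlinarith
    rw [hgN, hgr, hgt]
    field_simp
    ring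


include hc0 hc3 in
lemma qbt (x : ℝ) (N : ℕ) : ∏ i ∈ Finset.range N, (1 + x * c ^ (2 * i)) =
    ∑ r ∈ Finset.range (N + 1), gb c N r * c ^ ((r : ℤ) * ((r : ℤ) - 1)) * x ^ r := by
  have hcne : c ≠ 0 := ne_of_gt hc0
  induction N with
  | zero => simp [gb_zero hc0 hc3]
  | succ N ih =>
    rw [Finset.prod_range_succ, ih]
    conv_rhs => rw [Finset.sum_range_succ']
    have hterm : ∀ i ∈ Finset.range (N + 1),
        gb c (N + 1) (i + 1) * c ^ (((i + 1 : ℕ) : ℤ) * (((i + 1 : ℕ) : ℤ) - 1)) * x ^ (i + 1)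
          = gb c N (i + 1) * c ^ (((i + 1 : ℕ) : ℤ) * (((i + 1 : ℕ) : ℤ) - 1)) * x ^ (i + 1)
            + gb c N i * c ^ ((i : ℤ) * ((i : ℤ) - 1)) * x ^ i * (x * c ^ (2 * N)) := by
      intro i hi
      have hiN : i ≤ N := by simpa using Nat.lt_succ_iff.mp (Finset.mem_range.mp hi)
      have hE : c ^ (2 * (N - i)) * c ^ (((i + 1 : ℕ) : ℤ) * (((i + 1 : ℕ) : ℤ) - 1))
          = c ^ ((i : ℤ) * ((i : ℤ) - 1)) * c ^ (2 * N) := by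
        rw [← zpow_natCast c (2 * (N - i)), ← zpow_natCast c (2 * N),
          ← zpow_add₀ hcne, ← zpow_add₀ hcne]
        congr 1
        have : ((N - i : ℕ) : ℤ) = (N : ℤ) - i := by
          omega
        push_cast [this]
        ring
      rw [gb_pascal hc0 hc3 N i hiN, add_mul, add_mul]
      congr 1
      calc c ^ (2 * (N - i)) * gb c N i
            * c ^ (((i + 1 : ℕ) : ℤ) * (((i + 1 : ℕ) : ℤ) - 1)) * x ^ (i + 1)
          = gb c N i * (c ^ (2 * (N - i))
              * c ^ (((i + 1 : ℕ) : ℤ) * (((i + 1 : ℕ) : ℤ) - 1))) * x ^ (i + 1) := by ring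
        _ = gb c N i * (c ^ ((i : ℤ) * ((i : ℤ) - 1)) * c ^ (2 * N)) * x ^ (i + 1) := by
            rw [hE]
        _ = gb c N i * c ^ ((i : ℤ) * ((i : ℤ) - 1)) * x ^ i * (x * c ^ (2 * N)) := by ring
    rw [Finset.sum_congr rfl hterm, Finset.sum_add_distrib]
    have h0 : gb c (N + 1) 0 * c ^ (((0:ℕ) : ℤ) * (((0:ℕ) : ℤ) - 1)) * x ^ 0 = 1 := by
      rw [gb_zero hc0 hc3]; norm_num
    have hmul : ∑ i ∈ Finset.range (N + 1),
        gb c N i * c ^ ((i : ℤ) * ((i : ℤ) - 1)) * x ^ i * (x * c ^ (2 * N))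
          = (∑ r ∈ Finset.range (N + 1),
              gb c N r * c ^ ((r : ℤ) * ((r : ℤ) - 1)) * x ^ r) * (x * c ^ (2 * N)) := by
      rw [Finset.sum_mul]
    have hshift : ∑ i ∈ Finset.range (N + 1),
        gb c N (i + 1) * c ^ (((i + 1 : ℕ) : ℤ) * (((i + 1 : ℕ) : ℤ) - 1)) * x ^ (i + 1)
          = (∑ r ∈ Finset.range (N + 1),
              gb c N r * c ^ ((r : ℤ) * ((r : ℤ) - 1)) * x ^ r) - 1 := by
      have h2 := Finset.sum_range_succ'
        (fun r => gb c N r * c ^ ((r : ℤ) * ((r : ℤ) - 1)) * x ^ r) (N + 1)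
      have h3 := Finset.sum_range_succ
        (fun r => gb c N r * c ^ ((r : ℤ) * ((r : ℤ) - 1)) * x ^ r) (N + 1)
      simp only [gb_of_gt (Nat.lt_succ_self N), gb_zero hc0 hc3, Nat.cast_zero, pow_zero,
        mul_one, zero_mul, mul_zero, add_zero, zero_sub, zpow_zero, one_mul] at h2 h3
      linarith
    rw [hmul, hshift, h0]
    ring


lemma prod_zpow_eq (b : ℝ) (hb : b ≠ 0) (f : ℕ → ℤ) (n : ℕ) :
    ∏ i ∈ Finset.range n, b ^ f i = b ^ (∑ i ∈ Finset.range n, f i) := by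
  induction n with
  | zero => simp
  | succ n ih => rw [Finset.prod_range_succ, Finset.sum_range_succ, ih, zpow_add₀ hb]

lemma sum_two_add_one (N : ℕ) : ∑ i ∈ Finset.range N, (2 * (i:ℤ) + 1) = (N:ℤ)^2 := by
  induction N with
  | zero => simp
  | succ N ih => rw [Finset.sum_range_succ, ih]; push_cast; ring

lemma sum_exp_eq (N : ℕ) : ∑ i ∈ Finset.range N, (2 * (i:ℤ) + 1 - 2 * (N:ℤ)) = -(N:ℤ)^2 := by
  rw [Finset.sum_sub_distrib, sum_two_add_one, Finset.sum_const, Finset.card_range]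
  push_cast; ring

include hc0 hc3 in
lemma fin' (z : ℝ) (hz : z = 1 ∨ z = -1) (N : ℕ) :
    (∏ j ∈ Finset.range N, (1 + z * c ^ (2 * j + 1))) ^ 2
      = ∑ r ∈ Finset.range (2 * N + 1),
          gb c (2 * N) r * (z ^ ((r : ℤ) - N) * c ^ (((r : ℤ) - N) ^ 2)) := by
  have hcne : c ≠ 0 := ne_of_gt hc0
  have hzz : z * z = 1 := by rcases hz with rfl | rfl <;> norm_num
  have hzne : z ≠ 0 := by rcases hz with rfl | rfl <;> norm_num
  have hq := qbt hc0 hc3 (z * c ^ ((1 : ℤ) - 2 * N)) (2 * N)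
  -- LHS of `hq` equals `z^N * c^{-N²} * P²`
  have hfac : ∀ i : ℕ, 1 + z * c ^ ((1:ℤ) - 2 * N) * c ^ (2 * i)
      = 1 + z * c ^ (2 * (i:ℤ) + 1 - 2 * (N:ℤ)) := by
    intro i
    rw [← zpow_natCast c (2 * i), mul_assoc, ← zpow_add₀ hcne]
    congr 2
    push_cast; ring
  have hsec : ∀ i ∈ Finset.range N, (1 + z * c ^ (2 * ((N + i : ℕ):ℤ) + 1 - 2 * (N:ℤ)))
      = 1 + z * c ^ (2 * i + 1) := by
    intro i _
    rw [show 2 * ((N + i : ℕ):ℤ) + 1 - 2 * (N:ℤ) = ((2 * i + 1 : ℕ) : ℤ) by push_cast; ring,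
      zpow_natCast]
  have hfst : ∀ i ∈ Finset.range N, (1 + z * c ^ (2 * (i:ℤ) + 1 - 2 * (N:ℤ)))
      = (z * c ^ (2 * (i:ℤ) + 1 - 2 * (N:ℤ))) * (1 + z * c ^ (2 * (N - 1 - i) + 1)) := by
    intro i hi
    have hiN : i < N := Finset.mem_range.mp hi
    have hc1 : ((N - 1 - i : ℕ) : ℤ) = (N:ℤ) - 1 - i := by omega
    have hcc : c ^ (2 * (i:ℤ) + 1 - 2 * (N:ℤ)) * c ^ (((2 * (N - 1 - i) + 1 : ℕ)) : ℤ) = 1 := by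
      rw [← zpow_add₀ hcne,
        show (2 * (i:ℤ) + 1 - 2 * (N:ℤ)) + ((2 * (N - 1 - i) + 1 : ℕ) : ℤ) = 0 by
          push_cast [hc1]; ring]
      exact zpow_zero c
    have expand : (z * c ^ (2 * (i:ℤ) + 1 - 2 * (N:ℤ))) * (1 + z * c ^ (2 * (N - 1 - i) + 1))
        = z * c ^ (2 * (i:ℤ) + 1 - 2 * (N:ℤ))
          + (z * z) * (c ^ (2 * (i:ℤ) + 1 - 2 * (N:ℤ)) * c ^ (((2 * (N - 1 - i) + 1 : ℕ)) : ℤ)) := by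
      rw [zpow_natCast]; ring
    rw [expand, hzz, hcc]
    ring
  have hA : ∏ i ∈ Finset.range (2 * N), (1 + z * c ^ ((1:ℤ) - 2 * N) * c ^ (2 * i))
      = z ^ N * c ^ (-((N:ℤ)^2))
          * (∏ j ∈ Finset.range N, (1 + z * c ^ (2 * j + 1))) ^ 2 := by
    calc ∏ i ∈ Finset.range (2 * N), (1 + z * c ^ ((1:ℤ) - 2 * N) * c ^ (2 * i))
        = ∏ i ∈ Finset.range (2 * N), (1 + z * c ^ (2 * (i:ℤ) + 1 - 2 * (N:ℤ))) :=
          Finset.prod_congr rfl fun i _ => hfac i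
      _ = (∏ i ∈ Finset.range N, (1 + z * c ^ (2 * (i:ℤ) + 1 - 2 * (N:ℤ))))
          * ∏ i ∈ Finset.range N, (1 + z * c ^ (2 * ((N + i : ℕ):ℤ) + 1 - 2 * (N:ℤ))) := by
          rw [show 2 * N = N + N by ring, Finset.prod_range_add]
      _ = ((∏ i ∈ Finset.range N, (z * c ^ (2 * (i:ℤ) + 1 - 2 * (N:ℤ))))
            * ∏ i ∈ Finset.range N, (1 + z * c ^ (2 * (N - 1 - i) + 1)))
          * ∏ i ∈ Finset.range N, (1 + z * c ^ (2 * i + 1)) := by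
          rw [Finset.prod_congr rfl hfst, Finset.prod_congr rfl hsec, Finset.prod_mul_distrib]
      _ = z ^ N * c ^ (-((N:ℤ)^2))
            * (∏ j ∈ Finset.range N, (1 + z * c ^ (2 * j + 1))) ^ 2 := by
          have h1 : ∏ i ∈ Finset.range N, (1 + z * c ^ (2 * (N - 1 - i) + 1))
              = ∏ j ∈ Finset.range N, (1 + z * c ^ (2 * j + 1)) :=
            Finset.prod_range_reflect (fun j => 1 + z * c ^ (2 * j + 1)) N
          have h2 : ∏ i ∈ Finset.range N, (z * c ^ (2 * (i:ℤ) + 1 - 2 * (N:ℤ)))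
              = z ^ N * c ^ (-((N:ℤ)^2)) := by
            rw [Finset.prod_mul_distrib, Finset.prod_const, Finset.card_range,
              prod_zpow_eq c hcne, sum_exp_eq]
          rw [h1, h2]
          ring
  -- each RHS term
  have hB : ∀ r ∈ Finset.range (2 * N + 1),
      gb c (2 * N) r * c ^ ((r : ℤ) * ((r : ℤ) - 1)) * (z * c ^ ((1:ℤ) - 2 * N)) ^ r
          * (z ^ N * c ^ ((N:ℤ)^2))
        = gb c (2 * N) r * (z ^ ((r : ℤ) - N) * c ^ (((r : ℤ) - N) ^ 2)) := by
    intro r _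
    have hz2 : z ^ (2 * (N:ℤ)) = 1 := by
      rw [zpow_mul, show z ^ (2:ℤ) = z * z by
        rw [show (2:ℤ) = 1 + 1 by norm_num, zpow_add₀ hzne, zpow_one], hzz, one_zpow]
    have hzrN : z ^ ((r:ℤ) - N) = z ^ r * z ^ N := by
      have h1 : z ^ ((r:ℤ) + N) = z ^ ((r:ℤ) - N) * z ^ (2 * (N:ℤ)) := by
        rw [← zpow_add₀ hzne]; congr 1; ring
      rw [hz2, mul_one] at h1
      rw [← h1, show (r:ℤ) + N = ((r + N : ℕ) : ℤ) by push_cast; ring, zpow_natCast, pow_add]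
    have hcrN : c ^ (((r:ℤ) - N) ^ 2)
        = c ^ ((r:ℤ) * ((r:ℤ) - 1)) * c ^ (((1:ℤ) - 2 * N) * r) * c ^ ((N:ℤ)^2) := by
      rw [← zpow_add₀ hcne, ← zpow_add₀ hcne]; congr 1; ring
    have hxp : (z * c ^ ((1:ℤ) - 2 * N)) ^ r = z ^ r * c ^ (((1:ℤ) - 2 * N) * r) := by
      rw [mul_pow, ← zpow_natCast (c ^ ((1:ℤ) - 2 * N)) r, ← zpow_mul]
    rw [hxp, hzrN, hcrN]
    ring
  have hone : z ^ N * c ^ (-((N:ℤ)^2)) * (z ^ N * c ^ ((N:ℤ)^2)) = 1 := by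
    rw [show z ^ N * c ^ (-((N:ℤ)^2)) * (z ^ N * c ^ ((N:ℤ)^2))
        = (z ^ N * z ^ N) * (c ^ (-((N:ℤ)^2)) * c ^ ((N:ℤ)^2)) by ring,
      ← pow_add, ← zpow_add₀ hcne]
    rw [show -(((N:ℤ))^2) + ((N:ℤ))^2 = 0 by ring, zpow_zero, mul_one, ← two_mul, pow_mul,
      show z ^ 2 = 1 by rw [pow_two, hzz], one_pow]
  calc (∏ j ∈ Finset.range N, (1 + z * c ^ (2 * j + 1))) ^ 2
      = (z ^ N * c ^ (-((N:ℤ)^2))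
          * (∏ j ∈ Finset.range N, (1 + z * c ^ (2 * j + 1))) ^ 2) * (z ^ N * c ^ ((N:ℤ)^2)) := by
        rw [mul_comm (z ^ N * c ^ (-((N:ℤ)^2)))
          ((∏ j ∈ Finset.range N, (1 + z * c ^ (2 * j + 1))) ^ 2), mul_assoc, hone, mul_one]
    _ = (∑ r ∈ Finset.range (2 * N + 1),
          gb c (2 * N) r * c ^ ((r : ℤ) * ((r : ℤ) - 1)) * (z * c ^ ((1:ℤ) - 2 * N)) ^ r)
        * (z ^ N * c ^ ((N:ℤ)^2)) := by rw [← hA, hq]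
    _ = ∑ r ∈ Finset.range (2 * N + 1),
          gb c (2 * N) r * (z ^ ((r : ℤ) - N) * c ^ (((r : ℤ) - N) ^ 2)) := by
        rw [Finset.sum_mul]
        exact Finset.sum_congr rfl hB


include hc0 hc3 in
lemma gb_tendsto (k : ℤ) :
    Tendsto (fun N : ℕ => gb c (2 * N) (((N:ℤ) + k).toNat)) atTop (𝓝 (GG c)⁻¹) := by
  have hGG : (0:ℝ) < GG c := GG_pos hc0 hc3
  have harg1 : Tendsto (fun N : ℕ => 2 * N) atTop atTop :=
    tendsto_atTop_mono (fun n => by simp only [id_eq]; omega) tendsto_id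
  have harg2 : Tendsto (fun N : ℕ => ((N:ℤ) + k).toNat) atTop atTop :=
    tendsto_atTop_mono (fun n => by omega) (tendsto_sub_atTop_nat k.natAbs)
  have harg3 : Tendsto (fun N : ℕ => 2 * N - ((N:ℤ) + k).toNat) atTop atTop :=
    tendsto_atTop_mono (fun n => by omega) (tendsto_sub_atTop_nat k.natAbs)
  have tq : Tendsto (fun N : ℕ =>
      gp c (2 * N) / (gp c (((N:ℤ) + k).toNat) * gp c (2 * N - ((N:ℤ) + k).toNat)))
      atTop (𝓝 (GG c / (GG c * GG c))) := by
    exact Tendsto.div ((tendsto_gp hc0 hc3).comp harg1)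
      (((tendsto_gp hc0 hc3).comp harg2).mul ((tendsto_gp hc0 hc3).comp harg3))
      (ne_of_gt (mul_pos hGG hGG))
  have heq : GG c / (GG c * GG c) = (GG c)⁻¹ := by
    field_simp
  rw [heq] at tq
  apply tq.congr'
  filter_upwards [eventually_ge_atTop k.natAbs] with N hN
  unfold gb
  rw [if_pos (by omega)]

include hc0 hc3 in
lemma domlem (h : ℤ → ℝ) (hsum : Summable fun k : ℤ => |h k|) :
    Tendsto (fun N : ℕ => ∑ r ∈ Finset.range (2 * N + 1), gb c (2 * N) r * h ((r : ℤ) - N))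
      atTop (𝓝 ((∑' k : ℤ, h k) / GG c)) := by
  classical
  set F : ℕ → ℤ → ℝ :=
    fun N k => if k.natAbs ≤ N then h k * gb c (2 * N) (((N:ℤ) + k).toNat) else 0 with hF
  have hstep : ∀ N : ℕ, ∑ r ∈ Finset.range (2 * N + 1), gb c (2 * N) r * h ((r : ℤ) - N)
      = ∑' k : ℤ, F N k := by
    intro N
    have hsupp : ∀ k : ℤ, k ∉ Finset.Icc (-(N:ℤ)) N → F N k = 0 := by
      intro k hk
      simp only [Finset.mem_Icc] at hk
      simp only [hF]
      rw [if_neg (by omega)]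
    rw [tsum_eq_sum hsupp]
    apply Finset.sum_nbij' (fun r : ℕ => (r : ℤ) - N) (fun k : ℤ => ((N:ℤ) + k).toNat)
    · intro a ha
      simp only [Finset.mem_range] at ha
      simp only [Finset.mem_Icc]
      omega
    · intro a ha
      simp only [Finset.mem_Icc] at ha
      simp only [Finset.mem_range]
      omega
    · intro a ha; simp only [Finset.mem_range] at ha; omega
    · intro a ha; simp only [Finset.mem_Icc] at ha; omega
    · intro r hr
      simp only [Finset.mem_range] at hr
      simp only [hF]
      rw [if_pos (by omega), show ((N:ℤ) + ((r:ℤ) - N)).toNat = r by omega]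
      ring
  have hlim : Tendsto (fun N : ℕ => ∑' k : ℤ, F N k) atTop
      (𝓝 (∑' k : ℤ, h k * (GG c)⁻¹)) := by
    apply tendsto_tsum_of_dominated_convergence (bound := fun k : ℤ => 2 * |h k|)
      (hsum.mul_left 2)
    · intro k
      have : Tendsto (fun N : ℕ => h k * gb c (2 * N) (((N:ℤ) + k).toNat)) atTop
          (𝓝 (h k * (GG c)⁻¹)) := tendsto_const_nhds.mul (gb_tendsto hc0 hc3 k)
      apply this.congr'
      filter_upwards [eventually_ge_atTop k.natAbs] with N hN
      simp only [hF]
      rw [if_pos hN]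
    · filter_upwards with N
      intro k
      simp only [hF, Real.norm_eq_abs]
      split_ifs with hk
      · rw [abs_mul]
        have h1 : |gb c (2 * N) (((N:ℤ) + k).toNat)| ≤ 2 := by
          rw [abs_of_nonneg (gb_nonneg hc0 hc3 _ _)]
          exact gb_le_two hc0 hc3 _ _
        nlinarith [abs_nonneg (h k), abs_nonneg (gb c (2 * N) (((N:ℤ) + k).toNat))]
      · simp [abs_nonneg]
  rw [show (∑' k : ℤ, h k) / GG c = ∑' k : ℤ, h k * (GG c)⁻¹ by
    rw [tsum_mul_right]; rw [div_eq_mul_inv]]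
  exact (funext hstep : _) ▸ hlim

end c


lemma summable_zpow_sq {u : ℝ} (hu0 : 0 < u) (hu1 : u < 1) :
    Summable fun k : ℤ => u ^ (k ^ 2 : ℤ) := by
  have hnat : Summable fun n : ℕ => u ^ (n ^ 2 : ℕ) := by
    apply Summable.of_nonneg_of_le (fun n => by positivity)
      (fun n => pow_le_pow_of_le_one hu0.le hu1.le (Nat.le_self_pow (by norm_num) n))
    exact summable_geometric_of_lt_one hu0.le hu1
  apply Summable.of_nat_of_neg
  · apply hnat.congr
    intro n
    rw [show ((n:ℤ))^2 = ((n^2 : ℕ) : ℤ) by push_cast; ring, zpow_natCast]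
  · apply hnat.congr
    intro n
    rw [show (-(n:ℤ))^2 = ((n^2 : ℕ) : ℤ) by push_cast; ring, zpow_natCast]

lemma abs_neg_one_zpow (k : ℤ) : |(-1:ℝ) ^ k| = 1 := by
  rcases Int.even_or_odd k with h | h
  · rw [h.neg_one_zpow]; norm_num
  · rw [h.neg_one_zpow]; norm_num

lemma summable_zpow_sq4 {u : ℝ} (hu0 : 0 < u) (hu1 : u < 1) :
    Summable fun k : ℤ => u ^ (4 * k ^ 2 : ℤ) := by
  have h4 : (0:ℝ) < u ^ (4:ℕ) := by positivity
  have h41 : u ^ (4:ℕ) < 1 := pow_lt_one₀ hu0.le hu1 (by norm_num)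
  apply (summable_zpow_sq h4 h41).congr
  intro k
  rw [← zpow_natCast u 4, ← zpow_mul]
  norm_num

section u
variable {u : ℝ} (hu0 : 0 < u) (hu3 : u ≤ 1/3)

include hu0 hu3 in
lemma sum_odd_pow_le (s : Finset ℕ) : ∑ i ∈ s, u ^ (2 * i + 1) ≤ 3/8 := by
  have hterm : ∀ i : ℕ, u ^ (2 * i + 1) ≤ (1/3 : ℝ) * (1/9 : ℝ) ^ i := by
    intro i
    have h1 : u ^ (2 * i + 1) ≤ (1/3 : ℝ) ^ (2 * i + 1) :=
      pow_le_pow_left₀ hu0.le hu3 _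
    have h2 : ((1:ℝ)/3) ^ (2 * i + 1) = (1/3) * (1/9) ^ i := by
      rw [pow_succ', pow_mul]; norm_num
    linarith [h1, h2.le]
  have hs : Summable fun i : ℕ => (1/3 : ℝ) * (1/9 : ℝ) ^ i :=
    (summable_geometric_of_lt_one (by norm_num) (by norm_num)).mul_left _
  calc ∑ i ∈ s, u ^ (2 * i + 1) ≤ ∑ i ∈ s, (1/3 : ℝ) * (1/9 : ℝ) ^ i :=
        Finset.sum_le_sum fun i _ => hterm i
    _ ≤ ∑' i : ℕ, (1/3 : ℝ) * (1/9 : ℝ) ^ i := Summable.sum_le_tsum s (fun i _ => by positivity) hs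
    _ = (1/3) * (1 - 1/9)⁻¹ := by
        rw [tsum_mul_left, tsum_geometric_of_lt_one (by norm_num) (by norm_num)]
    _ ≤ 3/8 := by norm_num

include hu0 hu3 in
lemma odd_pow_le_one (i : ℕ) : u ^ (2 * i + 1) ≤ 1/3 := by
  calc u ^ (2 * i + 1) ≤ (1/3 : ℝ) ^ (2 * i + 1) := pow_le_pow_left₀ hu0.le hu3 _
    _ ≤ (1/3 : ℝ) ^ 1 := pow_le_pow_of_le_one (by norm_num) (by norm_num) (by omega)
    _ = 1/3 := pow_one _

include hu0 hu3 in
lemma prod_one_add_odd_le (s : Finset ℕ) : ∏ i ∈ s, (1 + u ^ (2 * i + 1)) ≤ 8/5 := by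
  have h1 : ∏ i ∈ s, ((1 + u ^ (2 * i + 1)) * (1 - u ^ (2 * i + 1))) ≤ 1 := by
    apply Finset.prod_le_one
    · intro i _
      nlinarith [odd_pow_le_one hu0 hu3 (u := u) i, pow_pos hu0 (2 * i + 1)]
    · intro i _
      nlinarith [odd_pow_le_one hu0 hu3 (u := u) i, pow_pos hu0 (2 * i + 1)]
  rw [Finset.prod_mul_distrib] at h1
  have h2 : (5/8 : ℝ) ≤ ∏ i ∈ s, (1 - u ^ (2 * i + 1)) := by
    have := one_sub_sum_le_prod (fun i => u ^ (2 * i + 1)) (fun i => by positivity)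
      (fun i => by nlinarith [odd_pow_le_one hu0 hu3 (u := u) i]) s
    have hs := sum_odd_pow_le hu0 hu3 (u := u) s
    linarith
  have h3 : (0:ℝ) ≤ ∏ i ∈ s, (1 + u ^ (2 * i + 1)) :=
    Finset.prod_nonneg fun i _ => by positivity
  nlinarith

include hu0 hu3 in
lemma multipliable_plus_sq (z : ℝ) (hz : z = 1 ∨ z = -1) :
    Multipliable fun i : ℕ => (1 + z * u ^ (2 * i + 1)) ^ 2 := by
  rcases hz with rfl | rfl
  · refine multipliable_of_one_le (fun i => by nlinarith [pow_pos hu0 (2 * i + 1)])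
      ((8/5 : ℝ) ^ 2) ?_
    intro s
    have heq : ∏ i ∈ s, (1 + 1 * u ^ (2 * i + 1)) ^ 2
        = (∏ i ∈ s, (1 + u ^ (2 * i + 1))) ^ 2 := by
      rw [← Finset.prod_pow]
      exact Finset.prod_congr rfl fun i _ => by rw [one_mul]
    rw [heq]
    have h := prod_one_add_odd_le hu0 hu3 (u := u) s
    have h3 : (0:ℝ) ≤ ∏ i ∈ s, (1 + u ^ (2 * i + 1)) :=
      Finset.prod_nonneg fun i _ => by positivity
    nlinarith
  · apply multipliable_of_le_one
    · intro i; positivity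
    · intro i
      nlinarith [odd_pow_le_one hu0 hu3 (u := u) i, pow_pos hu0 (2 * i + 1)]

include hu0 hu3 in
lemma summable_habs (z : ℝ) (hz : z = 1 ∨ z = -1) :
    Summable fun k : ℤ => |z ^ k * u ^ (k ^ 2 : ℤ)| := by
  have hu1 : u < 1 := lt_of_le_of_lt hu3 (by norm_num)
  have habs : ∀ k : ℤ, |z ^ k * u ^ (k ^ 2 : ℤ)| = u ^ (k ^ 2 : ℤ) := by
    intro k
    rcases hz with rfl | rfl
    · rw [one_zpow, one_mul, abs_of_pos (zpow_pos hu0 _)]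
    · rw [abs_mul, abs_neg_one_zpow, one_mul, abs_of_pos (zpow_pos hu0 _)]
  exact (funext habs : _) ▸ summable_zpow_sq hu0 hu1

include hu0 hu3 in
lemma tprod_plus_sq (z : ℝ) (hz : z = 1 ∨ z = -1) :
    ∏' i : ℕ, (1 + z * u ^ (2 * i + 1)) ^ 2
      = (∑' k : ℤ, z ^ k * u ^ (k ^ 2 : ℤ)) / GG u := by
  have hd := domlem hu0 hu3 (fun k : ℤ => z ^ k * u ^ (k ^ 2 : ℤ)) (summable_habs hu0 hu3 z hz)
  have ht : Tendsto (fun N : ℕ => ∏ i ∈ Finset.range N, (1 + z * u ^ (2 * i + 1)) ^ 2) atTop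
      (𝓝 ((∑' k : ℤ, z ^ k * u ^ (k ^ 2 : ℤ)) / GG u)) := by
    apply hd.congr
    intro N
    rw [Finset.prod_pow]
    exact (fin' hu0 hu3 z hz N).symm
  exact tendsto_nhds_unique
    ((multipliable_plus_sq hu0 hu3 z hz).hasProd.tendsto_prod_nat) ht

include hu0 hu3 in
lemma multipliable_gp_factor : Multipliable fun i : ℕ => (1 - u ^ (2 * (i + 1))) := by
  apply multipliable_of_le_one
  · intro i
    nlinarith [pow_le_ninth hu0 hu3 (c := u) i]
  · intro i
    nlinarith [pow_pos hu0 (2 * (i + 1))]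

include hu0 hu3 in
lemma tprod_gp : ∏' i : ℕ, (1 - u ^ (2 * (i + 1))) = GG u :=
  tendsto_nhds_unique
    ((multipliable_gp_factor hu0 hu3).hasProd.tendsto_prod_nat)
    (tendsto_gp hu0 hu3)

include hu0 hu3 in
lemma multipliable_inv_factor : Multipliable fun i : ℕ => (1 - u ^ (2 * (i + 1)))⁻¹ := by
  apply multipliable_of_one_le (C := (8/7 : ℝ))
  · intro i
    rw [le_inv_comm₀]
    · nlinarith [pow_pos hu0 (2 * (i + 1)), pow_le_ninth hu0 hu3 (c := u) i]
    · norm_num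
    · nlinarith [pow_le_ninth hu0 hu3 (c := u) i]
  · intro s
    rw [Finset.prod_inv_distrib]
    have h1 : (7/8 : ℝ) ≤ ∏ i ∈ s, (1 - u ^ (2 * (i + 1))) := by
      have := one_sub_sum_le_prod (fun i => u ^ (2 * (i + 1))) (fun i => by positivity)
        (fun i => by nlinarith [pow_le_ninth hu0 hu3 (c := u) i]) s
      have hs := sum_pow_le hu0 hu3 (c := u) s
      linarith
    rw [inv_le_comm₀ (by linarith) (by norm_num)]
    linarith

include hu0 hu3 in
lemma tprod_inv_gp : ∏' i : ℕ, (1 - u ^ (2 * (i + 1)))⁻¹ = (GG u)⁻¹ := by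
  apply tendsto_nhds_unique
    ((multipliable_inv_factor hu0 hu3).hasProd.tendsto_prod_nat)
  have : Tendsto (fun N : ℕ => (gp u N)⁻¹) atTop (𝓝 (GG u)⁻¹) :=
    (tendsto_gp hu0 hu3).inv₀ (ne_of_gt (GG_pos hu0 hu3))
  apply this.congr
  intro N
  rw [Finset.prod_inv_distrib]
  rfl

end u

lemma parity_sum {u : ℝ} (hu0 : 0 < u) (hu1 : u < 1) :
    (∑' k : ℤ, (1:ℝ) ^ k * u ^ (k ^ 2 : ℤ)) + (∑' k : ℤ, (-1:ℝ) ^ k * u ^ (k ^ 2 : ℤ))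
      = 2 * ∑' k : ℤ, u ^ (4 * k ^ 2 : ℤ) := by
  have hS1 : Summable fun k : ℤ => (1:ℝ) ^ k * u ^ (k ^ 2 : ℤ) := by
    apply (summable_zpow_sq hu0 hu1).congr
    intro k; rw [one_zpow, one_mul]
  have hS2 : Summable fun k : ℤ => (-1:ℝ) ^ k * u ^ (k ^ 2 : ℤ) := by
    apply Summable.of_abs
    have : ∀ k : ℤ, |(-1:ℝ) ^ k * u ^ (k ^ 2 : ℤ)| = u ^ (k ^ 2 : ℤ) := by
      intro k
      rw [abs_mul, abs_neg_one_zpow, one_mul, abs_of_pos (zpow_pos hu0 _)]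
    exact (funext this : _) ▸ summable_zpow_sq hu0 hu1
  rw [← Summable.tsum_add hS1 hS2]
  set g : ℤ → ℝ := fun k => (1:ℝ) ^ k * u ^ (k ^ 2 : ℤ) + (-1:ℝ) ^ k * u ^ (k ^ 2 : ℤ) with hgdef
  have hgsum : Summable g := hS1.add hS2
  have hinj : Function.Injective (fun j : ℤ => 2 * j) := fun a b hab => by
    simpa using hab
  have hvanish : ∀ k : ℤ, k ∉ Set.range (fun j : ℤ => 2 * j) → g k = 0 := by
    intro k hk
    have hodd : Odd k := by
      rcases Int.even_or_odd k with he | ho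
      · exfalso; obtain ⟨l, hl⟩ := he; exact hk ⟨l, show 2 * l = k by omega⟩
      · exact ho
    have hm1 : (-1:ℝ) ^ k = -1 := hodd.neg_one_zpow
    simp only [hgdef, hm1, one_zpow]
    ring
  have hmain : HasSum (g ∘ fun j : ℤ => 2 * j) (∑' k : ℤ, g k) :=
    (hinj.hasSum_iff hvanish).mpr hgsum.hasSum
  rw [← hmain.tsum_eq]
  have : ∀ j : ℤ, (g ∘ fun j : ℤ => 2 * j) j = 2 * u ^ (4 * j ^ 2 : ℤ) := by
    intro j
    simp only [Function.comp_apply, hgdef, one_zpow, one_mul]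
    have hm1 : (-1:ℝ) ^ (2 * j) = 1 := (even_two_mul j).neg_one_zpow
    rw [hm1]
    rw [show (2 * j) ^ 2 = 4 * j ^ 2 by ring]
    ring
  rw [tsum_congr this, tsum_mul_left]


lemma sum_range_two_mul (M : ℕ) : ∑ i ∈ Finset.range M, 2 * (i + 1) = M ^ 2 + M := by
  induction M with
  | zero => simp
  | succ M ih => rw [Finset.sum_range_succ, ih]; ring

lemma pow_ratio (Q : ℝ) (hQ : 0 < Q) (a b d e : ℕ) (E : ℤ) (hE : (a:ℤ) = b + d + e + E)
    (A B D : ℝ) (hB : B ≠ 0) (hD : D ≠ 0) :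
    Q ^ a * A / (Q ^ b * B * (Q ^ d * D)) / Q ^ e = A / (B * D) * Q ^ E := by
  have hQne : Q ≠ 0 := ne_of_gt hQ
  have h1 : Q ^ a = Q ^ b * Q ^ d * Q ^ e * Q ^ E := by
    rw [← zpow_natCast Q a, hE, zpow_add₀ hQne, zpow_add₀ hQne, zpow_add₀ hQne,
      zpow_natCast, zpow_natCast, zpow_natCast]
  rw [h1]
  have hb : Q ^ b ≠ 0 := by positivity
  have hd : Q ^ d ≠ 0 := by positivity
  have he : Q ^ e ≠ 0 := by positivity
  field_simp

end SpAux

open SpAux Filter Finset Topology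

/-- For fixed odd prime power `q`, the limit over even `n` of `i_Sp(2n,q)/q^{n²}`, where
`i_Sp(2n,q) = ∑_{r=0}^n |Sp(2n,q)|/(|Sp(2r,q)| |Sp(2n-2r,q)|)`, equals
`(1/2)[∏(1+q^{1-2i})² + ∏(1-q^{1-2i})²] = ∏(1+q^{4-8i})²(1-q^{-8i})/(1-q^{-2i})`. -/
theorem involutions_Sp_odd_char_limit (q : ℕ) (hq : ∃ p k : ℕ, p.Prime ∧ 0 < k ∧ q = p ^ k)
    (hodd : Odd q) :
    Filter.Tendsto
      (fun m : ℕ => (∑ r ∈ Finset.range (2 * m + 1),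
          spOrder q (2 * m) / (spOrder q r * spOrder q (2 * m - r))) / (q : ℝ) ^ ((2 * m) ^ 2))
      Filter.atTop
      (nhds ((1 / 2) * ((∏' i : ℕ, (1 + (q : ℝ) ^ ((1 : ℤ) - 2 * ((i : ℤ) + 1))) ^ 2)
        + ∏' i : ℕ, (1 - (q : ℝ) ^ ((1 : ℤ) - 2 * ((i : ℤ) + 1))) ^ 2))) ∧
    (1 / 2) * ((∏' i : ℕ, (1 + (q : ℝ) ^ ((1 : ℤ) - 2 * ((i : ℤ) + 1))) ^ 2)
        + ∏' i : ℕ, (1 - (q : ℝ) ^ ((1 : ℤ) - 2 * ((i : ℤ) + 1))) ^ 2) =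
      ∏' i : ℕ, ((1 + (q : ℝ) ^ ((4 : ℤ) - 8 * ((i : ℤ) + 1))) ^ 2
        * (1 - (q : ℝ) ^ (-(8 : ℤ) * ((i : ℤ) + 1)))
        / (1 - (q : ℝ) ^ (-(2 : ℤ) * ((i : ℤ) + 1)))) := by
  classical
  have hq3 : 3 ≤ q := by
    obtain ⟨p, k, hp, hk, rfl⟩ := hq
    have hp2 : 2 ≤ p := hp.two_le
    have hpne : p ≠ 2 := by
      rintro rfl
      have heven : Even (2 ^ k) := (Nat.even_pow).mpr ⟨even_two, by omega⟩
      exact (Nat.not_odd_iff_even.mpr heven) hodd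
    have hp3 : 3 ≤ p := by omega
    calc 3 ≤ p := hp3
      _ ≤ p ^ k := Nat.le_self_pow (by omega) p
  set Q : ℝ := (q : ℝ) with hQdef
  have hQ3 : (3:ℝ) ≤ Q := by rw [hQdef]; exact_mod_cast hq3
  have hQ0 : (0:ℝ) < Q := by linarith
  have hQne : Q ≠ 0 := ne_of_gt hQ0
  set c : ℝ := Q⁻¹ with hcdef
  have hc0 : 0 < c := by positivity
  have hc3 : c ≤ 1/3 := by
    rw [hcdef, show (1:ℝ)/3 = (3:ℝ)⁻¹ by norm_num]
    exact inv_anti₀ (by norm_num) hQ3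
  have hc1 : c < 1 := lt_of_le_of_lt hc3 (by norm_num)
  have hc40 : 0 < c ^ 4 := by positivity
  have hc43 : c ^ 4 ≤ 1/3 := by
    have h1 : c ^ 4 ≤ (1/3 : ℝ) ^ 4 := pow_le_pow_left₀ hc0.le hc3 4
    have h2 : ((1:ℝ)/3) ^ 4 ≤ (1:ℝ)/3 := by norm_num
    linarith
  have hGpos : 0 < GG c := GG_pos hc0 hc3
  have hG4pos : 0 < GG (c ^ 4) := GG_pos hc40 hc43
  -- `spOrder` in terms of `gp`
  have hsp : ∀ M : ℕ, spOrder Q M = Q ^ (2 * M ^ 2 + M) * gp c M := by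
    intro M
    unfold spOrder gp
    have hfac : ∀ i ∈ Finset.range M, Q ^ (2 * (i + 1)) - 1
        = Q ^ (2 * (i + 1)) * (1 - c ^ (2 * (i + 1))) := by
      intro i _
      rw [hcdef, inv_pow, mul_sub, mul_one, mul_inv_cancel₀ (by positivity)]
    rw [Finset.prod_congr rfl hfac, Finset.prod_mul_distrib,
      Finset.prod_pow_eq_pow_sum, sum_range_two_mul, ← mul_assoc, ← pow_add]
    congr 2
    ring
  -- per-term identity
  have hterm : ∀ m : ℕ, ∀ r ∈ Finset.range (2 * m + 1),
      spOrder Q (2 * m) / (spOrder Q r * spOrder Q (2 * m - r)) / Q ^ ((2 * m) ^ 2)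
        = gb c (2 * m) r * c ^ (4 * ((r : ℤ) - (m : ℤ)) ^ 2) := by
    intro m r hr
    have hr2 : r ≤ 2 * m := by
      have := Finset.mem_range.mp hr; omega
    rw [hsp, hsp, hsp]
    have hgb : gb c (2 * m) r = gp c (2 * m) / (gp c r * gp c (2 * m - r)) := by
      unfold gb; rw [if_pos hr2]
    rw [hgb]
    have hE : ((2 * (2 * m) ^ 2 + 2 * m : ℕ) : ℤ)
        = ((2 * r ^ 2 + r : ℕ) : ℤ) + ((2 * (2 * m - r) ^ 2 + (2 * m - r) : ℕ) : ℤ)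
          + (((2 * m) ^ 2 : ℕ) : ℤ) + (-(4 * ((r : ℤ) - (m : ℤ)) ^ 2)) := by
      have hs : ((2 * m - r : ℕ) : ℤ) = 2 * (m : ℤ) - (r : ℤ) := by omega
      push_cast [hs]
      ring
    rw [pow_ratio Q hQ0 (2 * (2 * m) ^ 2 + 2 * m) (2 * r ^ 2 + r)
      (2 * (2 * m - r) ^ 2 + (2 * m - r)) ((2 * m) ^ 2) (-(4 * ((r : ℤ) - (m : ℤ)) ^ 2)) hE
      (gp c (2 * m)) (gp c r) (gp c (2 * m - r))
      (ne_of_gt (gp_pos hc0 hc3 r)) (ne_of_gt (gp_pos hc0 hc3 (2 * m - r)))]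
    congr 1
    rw [hcdef, inv_zpow, ← zpow_neg]
  -- rewrite the function
  have hfun : (fun m : ℕ => (∑ r ∈ Finset.range (2 * m + 1),
        spOrder Q (2 * m) / (spOrder Q r * spOrder Q (2 * m - r))) / Q ^ ((2 * m) ^ 2))
      = fun m : ℕ => ∑ r ∈ Finset.range (2 * m + 1),
          gb c (2 * m) r * c ^ (4 * ((r : ℤ) - (m : ℤ)) ^ 2) := by
    funext m
    rw [Finset.sum_div]
    exact Finset.sum_congr rfl (hterm m)
  have hsum4 : Summable fun k : ℤ => |c ^ (4 * k ^ 2 : ℤ)| :=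
    (summable_zpow_sq4 hc0 hc1).congr fun k => (abs_of_pos (zpow_pos hc0 _)).symm
  have hd := domlem hc0 hc3 (fun k : ℤ => c ^ (4 * k ^ 2 : ℤ)) hsum4
  -- identify statement tprods
  have hA : (∏' i : ℕ, (1 + Q ^ ((1 : ℤ) - 2 * ((i : ℤ) + 1))) ^ 2)
      = ∏' i : ℕ, (1 + 1 * c ^ (2 * i + 1)) ^ 2 := by
    apply tprod_congr; intro i
    rw [show (1:ℤ) - 2 * ((i:ℤ) + 1) = -(((2 * i + 1 : ℕ)) : ℤ) by push_cast; ring,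
      zpow_neg, zpow_natCast, ← inv_pow, ← hcdef, one_mul]
  have hB : (∏' i : ℕ, (1 - Q ^ ((1 : ℤ) - 2 * ((i : ℤ) + 1))) ^ 2)
      = ∏' i : ℕ, (1 + (-1) * c ^ (2 * i + 1)) ^ 2 := by
    apply tprod_congr; intro i
    rw [show (1:ℤ) - 2 * ((i:ℤ) + 1) = -(((2 * i + 1 : ℕ)) : ℤ) by push_cast; ring,
      zpow_neg, zpow_natCast, ← inv_pow, ← hcdef]
    ring
  have hTP1 : ∏' i : ℕ, (1 + 1 * c ^ (2 * i + 1)) ^ 2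
      = (∑' k : ℤ, (1:ℝ) ^ k * c ^ (k ^ 2 : ℤ)) / GG c :=
    tprod_plus_sq hc0 hc3 1 (Or.inl rfl)
  have hTPm1 : ∏' i : ℕ, (1 + (-1) * c ^ (2 * i + 1)) ^ 2
      = (∑' k : ℤ, (-1:ℝ) ^ k * c ^ (k ^ 2 : ℤ)) / GG c :=
    tprod_plus_sq hc0 hc3 (-1) (Or.inr rfl)
  have hpar := parity_sum hc0 hc1
  have hval : (1 / 2) * ((∏' i : ℕ, (1 + Q ^ ((1 : ℤ) - 2 * ((i : ℤ) + 1))) ^ 2)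
        + ∏' i : ℕ, (1 - Q ^ ((1 : ℤ) - 2 * ((i : ℤ) + 1))) ^ 2)
      = (∑' k : ℤ, c ^ (4 * k ^ 2 : ℤ)) / GG c := by
    rw [hA, hB, hTP1, hTPm1, ← add_div, hpar]
    ring
  constructor
  · rw [hval, hfun]
    exact hd
  · rw [hval]
    have hRW : (∏' i : ℕ, ((1 + Q ^ ((4 : ℤ) - 8 * ((i : ℤ) + 1))) ^ 2
          * (1 - Q ^ (-(8 : ℤ) * ((i : ℤ) + 1))) / (1 - Q ^ (-(2 : ℤ) * ((i : ℤ) + 1)))))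
        = ∏' i : ℕ, ((1 + 1 * (c ^ 4) ^ (2 * i + 1)) ^ 2
            * ((1 - (c ^ 4) ^ (2 * (i + 1))) * (1 - c ^ (2 * (i + 1)))⁻¹)) := by
      apply tprod_congr; intro i
      have e1 : Q ^ ((4:ℤ) - 8 * ((i:ℤ) + 1)) = (c ^ 4) ^ (2 * i + 1) := by
        rw [show (4:ℤ) - 8 * ((i:ℤ) + 1) = -(((4 * (2 * i + 1) : ℕ)) : ℤ) by push_cast; ring,
          zpow_neg, zpow_natCast, ← inv_pow, ← hcdef, pow_mul]
      have e2 : Q ^ (-(8:ℤ) * ((i:ℤ) + 1)) = (c ^ 4) ^ (2 * (i + 1)) := by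
        rw [show -(8:ℤ) * ((i:ℤ) + 1) = -(((4 * (2 * (i + 1)) : ℕ)) : ℤ) by push_cast; ring,
          zpow_neg, zpow_natCast, ← inv_pow, ← hcdef, pow_mul]
      have e3 : Q ^ (-(2:ℤ) * ((i:ℤ) + 1)) = c ^ (2 * (i + 1)) := by
        rw [show -(2:ℤ) * ((i:ℤ) + 1) = -(((2 * (i + 1) : ℕ)) : ℤ) by push_cast; ring,
          zpow_neg, zpow_natCast, ← inv_pow, ← hcdef]
      rw [e1, e2, e3, div_eq_mul_inv, one_mul]
      ring
    rw [hRW]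
    have M1 := multipliable_plus_sq hc40 hc43 1 (Or.inl rfl)
    have M2 := multipliable_gp_factor hc40 hc43
    have M3 := multipliable_inv_factor hc0 hc3
    rw [Multipliable.tprod_mul M1 (M2.mul M3), Multipliable.tprod_mul M2 M3]
    rw [tprod_plus_sq hc40 hc43 1 (Or.inl rfl), tprod_gp hc40 hc43, tprod_inv_gp hc0 hc3]
    have hT4' : (∑' k : ℤ, (1:ℝ) ^ k * (c ^ 4) ^ (k ^ 2 : ℤ))
        = ∑' k : ℤ, c ^ (4 * k ^ 2 : ℤ) := by
      apply tsum_congr; intro k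
      rw [one_zpow, one_mul, ← zpow_natCast c 4, ← zpow_mul]
      norm_num
    rw [hT4']
    have h1 : GG c ≠ 0 := ne_of_gt hGpos
    have h2 : GG (c ^ 4) ≠ 0 := ne_of_gt hG4pos
    field_simp
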